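/- If Z_1, Z_2, Z_3, Z_4 are centered jointly Gaussian real random variables with covariances σ_{i,j} = E[Z_i Z_j], then E[Z_1 Z_2 Z_3 Z_4] = σ_{1,2}σ_{3,4} + σ_{1,3}σ_{2,4} + σ_{2,3}σ_{1,4}. -/

import Mathlib

open MeasureTheory ProbabilityTheory Real Set
open scoped NNReal ENNReal

open scoped NNReal ENNReal

-- even moment of gaussian kernel, full line
private lemma stmt12_intEvenPow {b : ℝ} (hb : 0 < b) (n : ℕ) :
    ∫ x : ℝ, x ^ (2*n) * rexp (-b * x^2)
      = b ^ (-(2*(n:ℝ)+1)/2) * Real.Gamma ((2*(n:ℝ)+1)/2) := by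
  have h1 : (fun x : ℝ => x ^ (2*n) * rexp (-b * x^2))
      = fun x : ℝ => |x| ^ (2*n) * rexp (-b * |x|^2) := by
    funext x
    simp [pow_mul, sq_abs]
  rw [h1, integral_comp_abs (f := fun x => x ^ (2*n) * rexp (-b * x^2))]
  have h2 : ∀ x ∈ Ioi (0:ℝ), x ^ (2*n) * rexp (-b * x^2)
      = x ^ ((2*(n:ℝ))) * rexp (-b * x ^ ((2:ℝ))) := by
    intro x hx
    rw [show ((2:ℝ)*(n:ℝ)) = ((2*n : ℕ) : ℝ) by push_cast; ring,
      Real.rpow_natCast, show ((2:ℝ)) = ((2 : ℕ) : ℝ) by norm_num, Real.rpow_natCast]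
  rw [setIntegral_congr_fun measurableSet_Ioi h2,
    integral_rpow_mul_exp_neg_mul_rpow (by norm_num) (by have := Nat.cast_nonneg (α := ℝ) n; linarith) hb]
  ring

private lemma stmt12_integral_gaussianReal_eq {v : ℝ≥0} (hv : v ≠ 0) (g : ℝ → ℝ) :
    ∫ x, g x ∂(gaussianReal 0 v) = ∫ x, gaussianPDFReal 0 v x * g x := by
  rw [gaussianReal_of_var_ne_zero 0 hv]
  have hpdf : gaussianPDF 0 v = fun x => ((Real.toNNReal (gaussianPDFReal 0 v x) : ℝ≥0) : ℝ≥0∞) := by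
    funext x; rfl
  rw [hpdf, integral_withDensity_eq_integral_smul
    ((measurable_gaussianPDFReal 0 v).real_toNNReal) g]
  congr 1
  funext x
  rw [NNReal.smul_def, Real.coe_toNNReal _ (gaussianPDFReal_nonneg 0 v x)]
  rfl

private lemma stmt12_integral_pow_gaussianReal (v : ℝ≥0) {n : ℕ} (hn : n ≠ 0) :
    ∫ x, x ^ (2*n) ∂(gaussianReal 0 v)
      = ((2*(v:ℝ)) ^ ((2*(n:ℝ)+1)/2) * Real.Gamma ((2*(n:ℝ)+1)/2)) / Real.sqrt (2 * π * v) := by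
  by_cases hv : v = 0
  · subst hv
    rw [gaussianReal_zero_var, integral_dirac]
    simp [zero_pow (by omega : 2*n ≠ 0)]
  · have hvpos : (0:ℝ) < v := lt_of_le_of_ne v.coe_nonneg (by exact_mod_cast Ne.symm hv)
    have hb : (0:ℝ) < (2*(v:ℝ))⁻¹ := by positivity
    rw [stmt12_integral_gaussianReal_eq hv]
    have h1 : ∀ x : ℝ, gaussianPDFReal 0 v x * x ^ (2*n)
        = (Real.sqrt (2 * π * v))⁻¹ * (x ^ (2*n) * rexp (-(2*(v:ℝ))⁻¹ * x^2)) := by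
      intro x
      rw [gaussianPDFReal]
      have : -(x - 0)^2 / (2*(v:ℝ)) = -(2*(v:ℝ))⁻¹ * x^2 := by
        field_simp
        ring
      rw [this]; ring
    simp_rw [h1]
    rw [integral_const_mul, stmt12_intEvenPow hb n]
    have h2 : ((2*(v:ℝ))⁻¹) ^ (-(2*(n:ℝ)+1)/2) = (2*(v:ℝ)) ^ ((2*(n:ℝ)+1)/2) := by
      rw [Real.inv_rpow (by positivity),
        show (-(2*(n:ℝ)+1)/2) = -((2*(n:ℝ)+1)/2) by ring,
        Real.rpow_neg (by positivity), inv_inv]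
    rw [h2]
    ring

private lemma stmt12_gamma32 : Real.Gamma (3/2) = Real.sqrt π / 2 := by
  rw [show (3/2 : ℝ) = 1/2 + 1 by norm_num, Real.Gamma_add_one (by norm_num),
    Real.Gamma_one_half_eq]
  ring

private lemma stmt12_gamma52 : Real.Gamma (5/2) = 3 * Real.sqrt π / 4 := by
  rw [show (5/2 : ℝ) = 3/2 + 1 by norm_num, Real.Gamma_add_one (by norm_num), stmt12_gamma32]
  ring

private lemma stmt12_sqrt2piv (v : ℝ≥0) : Real.sqrt (2 * π * v) = Real.sqrt π * Real.sqrt (2*(v:ℝ)) := by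
  rw [show (2*π*(v:ℝ)) = π * (2*v) by ring, Real.sqrt_mul pi_pos.le]

private lemma stmt12_moment2 (v : ℝ≥0) : ∫ x, x^2 ∂(gaussianReal 0 v) = (v:ℝ) := by
  by_cases hv : v = 0
  · subst hv; rw [gaussianReal_zero_var, integral_dirac]; simp
  · have hvpos : (0:ℝ) < v := lt_of_le_of_ne v.coe_nonneg (by exact_mod_cast Ne.symm hv)
    have h := stmt12_integral_pow_gaussianReal v (n := 1) one_ne_zero
    norm_num at h
    rw [h, stmt12_gamma32, show (√2*√π*√(v:ℝ)) = √π * (√2 * √(v:ℝ)) by ring,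
      ← Real.sqrt_mul (by norm_num : (0:ℝ) ≤ 2) (v:ℝ)]
    have h32 : (2*(v:ℝ)) ^ ((3:ℝ)/2) = (2*(v:ℝ)) * Real.sqrt (2*(v:ℝ)) := by
      rw [show ((3:ℝ)/2) = 1 + 1/2 by norm_num, Real.rpow_add (by positivity), Real.rpow_one,
        ← Real.sqrt_eq_rpow]
    rw [h32]
    have hπ : Real.sqrt π ≠ 0 := by positivity
    have h2v : Real.sqrt (2*(v:ℝ)) ≠ 0 := by positivity
    field_simp

private lemma stmt12_moment4 (v : ℝ≥0) : ∫ x, x^4 ∂(gaussianReal 0 v) = 3 * (v:ℝ)^2 := by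
  by_cases hv : v = 0
  · subst hv; rw [gaussianReal_zero_var, integral_dirac]; simp
  · have hvpos : (0:ℝ) < v := lt_of_le_of_ne v.coe_nonneg (by exact_mod_cast Ne.symm hv)
    have h := stmt12_integral_pow_gaussianReal v (n := 2) two_ne_zero
    norm_num at h
    rw [h, stmt12_gamma52, show (√2*√π*√(v:ℝ)) = √π * (√2 * √(v:ℝ)) by ring,
      ← Real.sqrt_mul (by norm_num : (0:ℝ) ≤ 2) (v:ℝ)]
    have h52 : (2*(v:ℝ)) ^ ((5:ℝ)/2) = (2*(v:ℝ))^2 * Real.sqrt (2*(v:ℝ)) := by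
      rw [show ((5:ℝ)/2) = 2 + 1/2 by norm_num, Real.rpow_add (by positivity),
        ← Real.sqrt_eq_rpow, show ((2:ℝ):ℝ) = ((2:ℕ):ℝ) by norm_num, Real.rpow_natCast]
    rw [h52]
    have hπ : Real.sqrt π ≠ 0 := by positivity
    have h2v : Real.sqrt (2*(v:ℝ)) ≠ 0 := by positivity
    field_simp
    ring

private lemma stmt12_integrable_pow_gaussianReal (v : ℝ≥0) (n : ℕ) :
    Integrable (fun x : ℝ => x ^ (2*n)) (gaussianReal 0 v) := by
  by_cases hv : v = 0
  · subst hv; rw [gaussianReal_zero_var]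
    exact (integrable_const (((0:ℝ)) ^ (2*n))).congr (ae_eq_dirac (fun x : ℝ => x ^ (2*n))).symm
  · have hvpos : (0:ℝ) < v := lt_of_le_of_ne v.coe_nonneg (by exact_mod_cast Ne.symm hv)
    have hb : (0:ℝ) < (2*(v:ℝ))⁻¹ := by positivity
    rw [gaussianReal_of_var_ne_zero 0 hv]
    have hpdf : gaussianPDF 0 v
        = fun x => ((Real.toNNReal (gaussianPDFReal 0 v x) : ℝ≥0) : ℝ≥0∞) := by
      funext x; rfl
    rw [hpdf, integrable_withDensity_iff_integrable_smul
      ((measurable_gaussianPDFReal 0 v).real_toNNReal)]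
    have h1 : (fun x : ℝ => (Real.toNNReal (gaussianPDFReal 0 v x)) • x ^ (2*n))
        = fun x : ℝ => (Real.sqrt (2 * π * v))⁻¹ * (x ^ ((2*n : ℕ):ℝ) * rexp (-(2*(v:ℝ))⁻¹ * x^2)) := by
      funext x
      rw [NNReal.smul_def, Real.coe_toNNReal _ (gaussianPDFReal_nonneg 0 v x), gaussianPDFReal,
        Real.rpow_natCast]
      have : -(x - 0)^2 / (2*(v:ℝ)) = -(2*(v:ℝ))⁻¹ * x^2 := by field_simp; ring
      rw [this]; simp only [smul_eq_mul]; ring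
    rw [h1]
    exact (integrable_rpow_mul_exp_neg_mul_sq hb (by
      have := Nat.cast_nonneg (α := ℝ) (2*n); push_cast at this ⊢; linarith)).const_mul _

private lemma stmt12_L2 {Ω : Type*} [MeasureSpace Ω] (f : Fin 4 → Ω → ℝ)
    (h2 : ∀ i j, Integrable (fun ω => f i ω * f j ω) volume) (a : Fin 4 → ℝ) :
    ∫ ω, (∑ i, a i * f i ω)^2
      = ∑ i, ∑ j, a i * a j * ∫ ω, f i ω * f j ω := by
  have h1 : ∀ ω, (∑ i, a i * f i ω)^2
      = ∑ i : Fin 4, ∑ j : Fin 4, a i * a j * (f i ω * f j ω) := by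
    intro ω; simp only [Fin.sum_univ_four]; ring
  simp only [h1]
  rw [integral_finset_sum _ (fun i _ =>
    integrable_finset_sum _ (fun j _ => (h2 i j).const_mul _))]
  refine Finset.sum_congr rfl fun i _ => ?_
  rw [integral_finset_sum _ (fun j _ => (h2 i j).const_mul _)]
  exact Finset.sum_congr rfl fun j _ => integral_const_mul _ _

private lemma stmt12_L4 {Ω : Type*} [MeasureSpace Ω] (f : Fin 4 → Ω → ℝ)
    (h4 : ∀ i j k l, Integrable (fun ω => f i ω * f j ω * f k ω * f l ω) volume)
    (a : Fin 4 → ℝ) :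
    ∫ ω, (∑ i, a i * f i ω)^4
      = ∑ i, ∑ j, ∑ k, ∑ l, a i * a j * a k * a l * ∫ ω, f i ω * f j ω * f k ω * f l ω := by
  have h1 : ∀ ω, (∑ i, a i * f i ω)^4
      = ∑ i : Fin 4, ∑ j : Fin 4, ∑ k : Fin 4, ∑ l : Fin 4,
        a i * a j * a k * a l * (f i ω * f j ω * f k ω * f l ω) := by
    intro ω; simp only [Fin.sum_univ_four]; ring
  simp only [h1]
  rw [integral_finset_sum _ (fun i _ => integrable_finset_sum _ (fun j _ =>
    integrable_finset_sum _ (fun k _ =>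
      integrable_finset_sum _ (fun l _ => (h4 i j k l).const_mul _))))]
  refine Finset.sum_congr rfl fun i _ => ?_
  rw [integral_finset_sum _ (fun j _ => integrable_finset_sum _ (fun k _ =>
    integrable_finset_sum _ (fun l _ => (h4 i j k l).const_mul _)))]
  refine Finset.sum_congr rfl fun j _ => ?_
  rw [integral_finset_sum _ (fun k _ =>
    integrable_finset_sum _ (fun l _ => (h4 i j k l).const_mul _))]
  refine Finset.sum_congr rfl fun k _ => ?_
  rw [integral_finset_sum _ (fun l _ => (h4 i j k l).const_mul _)]
  exact Finset.sum_congr rfl fun l _ => integral_const_mul _ _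

private lemma stmt12_bnd4 (a b c d : ℝ) :
    |a * b * c * d| ≤ (a^4 + b^4 + c^4 + d^4) / 4 := by
  rcases abs_cases (a * b * c * d) with ⟨h, _⟩ | ⟨h, _⟩ <;> rw [h] <;>
    nlinarith [sq_nonneg (a*b - c*d), sq_nonneg (a*b + c*d), sq_nonneg (a^2 - b^2),
      sq_nonneg (c^2 - d^2), sq_nonneg (a^2 + b^2), sq_nonneg (c^2 + d^2)]

private lemma stmt12_bnd2 (a b : ℝ) : |a * b| ≤ (a^2 + b^2) / 2 := by
  rcases abs_cases (a * b) with ⟨h, _⟩ | ⟨h, _⟩ <;> rw [h] <;>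
    nlinarith [sq_nonneg (a - b), sq_nonneg (a + b)]

set_option maxHeartbeats 4000000 in
/-- Isserlis/Wick: for centered jointly Gaussian `Z₁,…,Z₄` with covariances
`σ_{i,j} = E[Z_i Z_j]`, one has `E[Z₁Z₂Z₃Z₄] = σ₁₂σ₃₄ + σ₁₃σ₂₄ + σ₂₃σ₁₄`. -/
theorem stmt12 {Ω : Type*} [MeasureSpace Ω] [IsProbabilityMeasure (volume : Measure Ω)]
    (Z : Fin 4 → Ω → ℝ)
    (hmeas : ∀ i, Measurable (Z i))
    -- jointly Gaussian and centered: every linear combination is a centered Gaussian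
    (hGauss : ∀ a : Fin 4 → ℝ, ∃ v : NNReal,
      Measure.map (fun ω => ∑ i, a i * Z i ω) (volume : Measure Ω) = gaussianReal 0 v) :
    (∫ ω, Z 0 ω * Z 1 ω * Z 2 ω * Z 3 ω)
      = (∫ ω, Z 0 ω * Z 1 ω) * (∫ ω, Z 2 ω * Z 3 ω)
        + (∫ ω, Z 0 ω * Z 2 ω) * (∫ ω, Z 1 ω * Z 3 ω)
        + (∫ ω, Z 1 ω * Z 2 ω) * (∫ ω, Z 0 ω * Z 3 ω) := by
  classical
  have hZi : ∀ i, Measure.map (Z i) (volume : Measure Ω)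
      = Measure.map (fun ω => ∑ j, (if j = i then (1:ℝ) else 0) * Z j ω) volume := by
    intro i
    congr 1
    funext ω
    simp
  have hpow : ∀ (i : Fin 4) (n : ℕ), Integrable (fun ω => Z i ω ^ (2*n)) volume := by
    intro i n
    obtain ⟨v, hv⟩ := hGauss (fun j => if j = i then (1:ℝ) else 0)
    have hmap : Measure.map (Z i) (volume : Measure Ω) = gaussianReal 0 v := by
      rw [hZi i, hv]
    have h1 : Integrable (fun x : ℝ => x ^ (2*n)) (Measure.map (Z i) volume) := by
      rw [hmap]; exact stmt12_integrable_pow_gaussianReal v n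
    have h2 := (integrable_map_measure (f := Z i) (g := fun x : ℝ => x ^ (2*n))
      (measurable_id.pow_const (2*n)).aestronglyMeasurable (hmeas i).aemeasurable).mp h1
    exact h2
  have hp4 : ∀ i : Fin 4, Integrable (fun ω => Z i ω ^ 4) volume := by
    intro i; have := hpow i 2; norm_num at this; exact this
  have hp2 : ∀ i : Fin 4, Integrable (fun ω => Z i ω ^ 2) volume := by
    intro i; have := hpow i 1; norm_num at this; exact this
  have int2 : ∀ i j : Fin 4, Integrable (fun ω => Z i ω * Z j ω) volume := by
    intro i j
    refine Integrable.mono' (((hp2 i).add (hp2 j)).div_const 2)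
      ((hmeas i).mul (hmeas j)).aestronglyMeasurable ?_
    filter_upwards with ω
    rw [Real.norm_eq_abs]
    exact stmt12_bnd2 _ _
  have int4 : ∀ i j k l : Fin 4,
      Integrable (fun ω => Z i ω * Z j ω * Z k ω * Z l ω) volume := by
    intro i j k l
    refine Integrable.mono' ((((hp4 i).add (hp4 j)).add ((hp4 k).add (hp4 l))).div_const 4)
      ((((hmeas i).mul (hmeas j)).mul (hmeas k)).mul (hmeas l)).aestronglyMeasurable ?_
    · filter_upwards with ω
      rw [Real.norm_eq_abs]
      calc |Z i ω * Z j ω * Z k ω * Z l ω|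
          ≤ (Z i ω ^ 4 + Z j ω ^ 4 + Z k ω ^ 4 + Z l ω ^ 4) / 4 := stmt12_bnd4 _ _ _ _
        _ = (Z i ω ^ 4 + Z j ω ^ 4 + (Z k ω ^ 4 + Z l ω ^ 4)) / 4 := by ring
  have key : ∀ a : Fin 4 → ℝ,
      ∫ ω, (∑ i, a i * Z i ω)^4 = 3 * (∫ ω, (∑ i, a i * Z i ω)^2)^2 := by
    intro a
    obtain ⟨v, hv⟩ := hGauss a
    have hSm : Measurable fun ω => ∑ i, a i * Z i ω :=
      Finset.measurable_sum _ fun i _ => (hmeas i).const_mul _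
    have e2 : ∫ ω, (∑ i, a i * Z i ω)^2 = (v:ℝ) := by
      rw [← stmt12_moment2 v, ← hv,
        integral_map hSm.aemeasurable ((continuous_pow 2).measurable).aestronglyMeasurable]
    have e4 : ∫ ω, (∑ i, a i * Z i ω)^4 = 3 * (v:ℝ)^2 := by
      rw [← stmt12_moment4 v, ← hv,
        integral_map hSm.aemeasurable ((continuous_pow 4).measurable).aestronglyMeasurable]
    rw [e2, e4]
  have Fact : ∀ a : Fin 4 → ℝ,
      (∑ i, ∑ j, ∑ k, ∑ l, a i * a j * a k * a l * ∫ ω, Z i ω * Z j ω * Z k ω * Z l ω)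
        = 3 * (∑ i, ∑ j, a i * a j * ∫ ω, Z i ω * Z j ω)^2 := by
    intro a
    rw [← stmt12_L4 Z int4 a, ← stmt12_L2 Z int2 a]
    exact key a
  have Fppp := Fact ![(1:ℝ), 1, 1, 1]
  have Fppm := Fact ![(1:ℝ), 1, 1, (-1)]
  have Fpmp := Fact ![(1:ℝ), 1, (-1), 1]
  have Fpmm := Fact ![(1:ℝ), 1, (-1), (-1)]
  have Fmpp := Fact ![(1:ℝ), (-1), 1, 1]
  have Fmpm := Fact ![(1:ℝ), (-1), 1, (-1)]
  have Fmmp := Fact ![(1:ℝ), (-1), (-1), 1]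
  have Fmmm := Fact ![(1:ℝ), (-1), (-1), (-1)]
  simp only [Fin.sum_univ_four, Matrix.cons_val_zero, Matrix.cons_val_one,
    Matrix.cons_val_two, Matrix.cons_val_three, Matrix.head_cons, Matrix.tail_cons] at Fppp Fppm Fpmp Fpmm Fmpp Fmpm Fmmp Fmmm
  have E0132 : (∫ ω, Z 0 ω * Z 1 ω * Z 3 ω * Z 2 ω) = ∫ ω, Z 0 ω * Z 1 ω * Z 2 ω * Z 3 ω :=
    integral_congr_ae (Filter.Eventually.of_forall fun ω => by ring)
  have E0213 : (∫ ω, Z 0 ω * Z 2 ω * Z 1 ω * Z 3 ω) = ∫ ω, Z 0 ω * Z 1 ω * Z 2 ω * Z 3 ω :=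
    integral_congr_ae (Filter.Eventually.of_forall fun ω => by ring)
  have E0231 : (∫ ω, Z 0 ω * Z 2 ω * Z 3 ω * Z 1 ω) = ∫ ω, Z 0 ω * Z 1 ω * Z 2 ω * Z 3 ω :=
    integral_congr_ae (Filter.Eventually.of_forall fun ω => by ring)
  have E0312 : (∫ ω, Z 0 ω * Z 3 ω * Z 1 ω * Z 2 ω) = ∫ ω, Z 0 ω * Z 1 ω * Z 2 ω * Z 3 ω :=
    integral_congr_ae (Filter.Eventually.of_forall fun ω => by ring)
  have E0321 : (∫ ω, Z 0 ω * Z 3 ω * Z 2 ω * Z 1 ω) = ∫ ω, Z 0 ω * Z 1 ω * Z 2 ω * Z 3 ω :=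
    integral_congr_ae (Filter.Eventually.of_forall fun ω => by ring)
  have E1023 : (∫ ω, Z 1 ω * Z 0 ω * Z 2 ω * Z 3 ω) = ∫ ω, Z 0 ω * Z 1 ω * Z 2 ω * Z 3 ω :=
    integral_congr_ae (Filter.Eventually.of_forall fun ω => by ring)
  have E1032 : (∫ ω, Z 1 ω * Z 0 ω * Z 3 ω * Z 2 ω) = ∫ ω, Z 0 ω * Z 1 ω * Z 2 ω * Z 3 ω :=
    integral_congr_ae (Filter.Eventually.of_forall fun ω => by ring)
  have E1203 : (∫ ω, Z 1 ω * Z 2 ω * Z 0 ω * Z 3 ω) = ∫ ω, Z 0 ω * Z 1 ω * Z 2 ω * Z 3 ω :=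
    integral_congr_ae (Filter.Eventually.of_forall fun ω => by ring)
  have E1230 : (∫ ω, Z 1 ω * Z 2 ω * Z 3 ω * Z 0 ω) = ∫ ω, Z 0 ω * Z 1 ω * Z 2 ω * Z 3 ω :=
    integral_congr_ae (Filter.Eventually.of_forall fun ω => by ring)
  have E1302 : (∫ ω, Z 1 ω * Z 3 ω * Z 0 ω * Z 2 ω) = ∫ ω, Z 0 ω * Z 1 ω * Z 2 ω * Z 3 ω :=
    integral_congr_ae (Filter.Eventually.of_forall fun ω => by ring)
  have E1320 : (∫ ω, Z 1 ω * Z 3 ω * Z 2 ω * Z 0 ω) = ∫ ω, Z 0 ω * Z 1 ω * Z 2 ω * Z 3 ω :=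
    integral_congr_ae (Filter.Eventually.of_forall fun ω => by ring)
  have E2013 : (∫ ω, Z 2 ω * Z 0 ω * Z 1 ω * Z 3 ω) = ∫ ω, Z 0 ω * Z 1 ω * Z 2 ω * Z 3 ω :=
    integral_congr_ae (Filter.Eventually.of_forall fun ω => by ring)
  have E2031 : (∫ ω, Z 2 ω * Z 0 ω * Z 3 ω * Z 1 ω) = ∫ ω, Z 0 ω * Z 1 ω * Z 2 ω * Z 3 ω :=
    integral_congr_ae (Filter.Eventually.of_forall fun ω => by ring)
  have E2103 : (∫ ω, Z 2 ω * Z 1 ω * Z 0 ω * Z 3 ω) = ∫ ω, Z 0 ω * Z 1 ω * Z 2 ω * Z 3 ω :=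
    integral_congr_ae (Filter.Eventually.of_forall fun ω => by ring)
  have E2130 : (∫ ω, Z 2 ω * Z 1 ω * Z 3 ω * Z 0 ω) = ∫ ω, Z 0 ω * Z 1 ω * Z 2 ω * Z 3 ω :=
    integral_congr_ae (Filter.Eventually.of_forall fun ω => by ring)
  have E2301 : (∫ ω, Z 2 ω * Z 3 ω * Z 0 ω * Z 1 ω) = ∫ ω, Z 0 ω * Z 1 ω * Z 2 ω * Z 3 ω :=
    integral_congr_ae (Filter.Eventually.of_forall fun ω => by ring)
  have E2310 : (∫ ω, Z 2 ω * Z 3 ω * Z 1 ω * Z 0 ω) = ∫ ω, Z 0 ω * Z 1 ω * Z 2 ω * Z 3 ω :=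
    integral_congr_ae (Filter.Eventually.of_forall fun ω => by ring)
  have E3012 : (∫ ω, Z 3 ω * Z 0 ω * Z 1 ω * Z 2 ω) = ∫ ω, Z 0 ω * Z 1 ω * Z 2 ω * Z 3 ω :=
    integral_congr_ae (Filter.Eventually.of_forall fun ω => by ring)
  have E3021 : (∫ ω, Z 3 ω * Z 0 ω * Z 2 ω * Z 1 ω) = ∫ ω, Z 0 ω * Z 1 ω * Z 2 ω * Z 3 ω :=
    integral_congr_ae (Filter.Eventually.of_forall fun ω => by ring)
  have E3102 : (∫ ω, Z 3 ω * Z 1 ω * Z 0 ω * Z 2 ω) = ∫ ω, Z 0 ω * Z 1 ω * Z 2 ω * Z 3 ω :=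
    integral_congr_ae (Filter.Eventually.of_forall fun ω => by ring)
  have E3120 : (∫ ω, Z 3 ω * Z 1 ω * Z 2 ω * Z 0 ω) = ∫ ω, Z 0 ω * Z 1 ω * Z 2 ω * Z 3 ω :=
    integral_congr_ae (Filter.Eventually.of_forall fun ω => by ring)
  have E3201 : (∫ ω, Z 3 ω * Z 2 ω * Z 0 ω * Z 1 ω) = ∫ ω, Z 0 ω * Z 1 ω * Z 2 ω * Z 3 ω :=
    integral_congr_ae (Filter.Eventually.of_forall fun ω => by ring)
  have E3210 : (∫ ω, Z 3 ω * Z 2 ω * Z 1 ω * Z 0 ω) = ∫ ω, Z 0 ω * Z 1 ω * Z 2 ω * Z 3 ω :=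
    integral_congr_ae (Filter.Eventually.of_forall fun ω => by ring)
  have S01 : (∫ ω, Z 1 ω * Z 0 ω) = ∫ ω, Z 0 ω * Z 1 ω :=
    integral_congr_ae (Filter.Eventually.of_forall fun ω => by ring)
  have S02 : (∫ ω, Z 2 ω * Z 0 ω) = ∫ ω, Z 0 ω * Z 2 ω :=
    integral_congr_ae (Filter.Eventually.of_forall fun ω => by ring)
  have S03 : (∫ ω, Z 3 ω * Z 0 ω) = ∫ ω, Z 0 ω * Z 3 ω :=
    integral_congr_ae (Filter.Eventually.of_forall fun ω => by ring)
  have S12 : (∫ ω, Z 2 ω * Z 1 ω) = ∫ ω, Z 1 ω * Z 2 ω :=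
    integral_congr_ae (Filter.Eventually.of_forall fun ω => by ring)
  have S13 : (∫ ω, Z 3 ω * Z 1 ω) = ∫ ω, Z 1 ω * Z 3 ω :=
    integral_congr_ae (Filter.Eventually.of_forall fun ω => by ring)
  have S23 : (∫ ω, Z 3 ω * Z 2 ω) = ∫ ω, Z 2 ω * Z 3 ω :=
    integral_congr_ae (Filter.Eventually.of_forall fun ω => by ring)
  linear_combination
      ((1 : ℝ)/192) * Fppp
      + ((-1 : ℝ)/192) * Fppm
      + ((-1 : ℝ)/192) * Fpmp
      + ((1 : ℝ)/192) * Fpmm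
      + ((-1 : ℝ)/192) * Fmpp
      + ((1 : ℝ)/192) * Fmpm
      + ((1 : ℝ)/192) * Fmmp
      + ((-1 : ℝ)/192) * Fmmm
      + (-1/24 : ℝ) * E0132
      + (-1/24 : ℝ) * E0213
      + (-1/24 : ℝ) * E0231
      + (-1/24 : ℝ) * E0312
      + (-1/24 : ℝ) * E0321
      + (-1/24 : ℝ) * E1023
      + (-1/24 : ℝ) * E1032
      + (-1/24 : ℝ) * E1203
      + (-1/24 : ℝ) * E1230
      + (-1/24 : ℝ) * E1302
      + (-1/24 : ℝ) * E1320
      + (-1/24 : ℝ) * E2013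
      + (-1/24 : ℝ) * E2031
      + (-1/24 : ℝ) * E2103
      + (-1/24 : ℝ) * E2130
      + (-1/24 : ℝ) * E2301
      + (-1/24 : ℝ) * E2310
      + (-1/24 : ℝ) * E3012
      + (-1/24 : ℝ) * E3021
      + (-1/24 : ℝ) * E3102
      + (-1/24 : ℝ) * E3120
      + (-1/24 : ℝ) * E3201
      + (-1/24 : ℝ) * E3210
      + ((1/4:ℝ) * ((∫ ω, Z 2 ω * Z 3 ω) + (∫ ω, Z 3 ω * Z 2 ω))) * S01
      + ((1/4:ℝ) * ((∫ ω, Z 1 ω * Z 3 ω) + (∫ ω, Z 3 ω * Z 1 ω))) * S02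
      + ((1/4:ℝ) * ((∫ ω, Z 1 ω * Z 2 ω) + (∫ ω, Z 2 ω * Z 1 ω))) * S03
      + ((1/2:ℝ) * (∫ ω, Z 0 ω * Z 3 ω)) * S12
      + ((1/2:ℝ) * (∫ ω, Z 0 ω * Z 2 ω)) * S13
      + ((1/2:ℝ) * (∫ ω, Z 0 ω * Z 1 ω)) * S23
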